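/- Define g(ν) = ν·( (1/2) log 5 − f(ν) ) where f(ν) = sup_{2/(ν+1) ≤ b ≤ 1} κ(bν, 1−b). Then lim_{ν→∞} g(ν) = (1/2) log(9/5). -/

import Mathlib

open Filter

noncomputable def fab (a b : ℝ) (p : ℝ × ℝ) : ℝ :=
  b * Real.log b - 2 * p.1 * Real.log p.1
    + ((a + 1 - b) / 2) * Real.log ((a + 1 - b) / 2)
    - ((a + 1 - b) / 2 - p.1) * Real.log ((a + 1 - b) / 2 - p.1)
    - 2 * p.2 * Real.log p.2
    - (b - p.1 - p.2) * Real.log (b - p.1 - p.2)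
    + ((a - 1 - b) / 2) * Real.log ((a - 1 - b) / 2)
    - ((a - 1 - b) / 2 - p.2) * Real.log ((a - 1 - b) / 2 - p.2)

/-- The domain `D_{a,b}` of `f_{a,b}`. -/
def Dab (a b : ℝ) : Set (ℝ × ℝ) :=
  {p | 0 ≤ p.1 ∧ 0 ≤ p.2 ∧ p.1 + p.2 ≤ b ∧ p.1 ≤ (a + 1 - b) / 2 ∧ p.2 ≤ (a - 1 - b) / 2}

/-- The entropy per step `κ(a,b) = (1/a) · sup_{(δ,ε) ∈ D_{a,b}} f_{a,b}(δ,ε)`. -/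
noncomputable def kappa (a b : ℝ) : ℝ := (1 / a) * sSup (fab a b '' Dab a b)

/-- `f(ν) = sup_{2/(ν+1) ≤ b ≤ 1} κ(bν, 1−b)`. -/
noncomputable def fnu (ν : ℝ) : ℝ :=
  sSup ((fun b : ℝ => kappa (b * ν) (1 - b)) '' Set.Icc (2 / (ν + 1)) 1)

/-- `g(ν) = ν·((1/2) log 5 − f(ν))`. -/
noncomputable def gnu (ν : ℝ) : ℝ := ν * ((1 / 2) * Real.log 5 - fnu ν)

lemma gibbs {x c : ℝ} (hx : 0 ≤ x) (hc : 0 < c) :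
    x * Real.log c - x * Real.log x ≤ c - x := by
  rcases hx.eq_or_lt with h | h
  · simp [← h]; linarith
  · have hl : Real.log (c / x) ≤ c / x - 1 := Real.log_le_sub_one_of_pos (div_pos hc h)
    rw [Real.log_div hc.ne' h.ne'] at hl
    have h2 : x * (Real.log c - Real.log x) ≤ x * (c / x - 1) :=
      mul_le_mul_of_nonneg_left hl h.le
    have h3 : x * (c / x - 1) = c - x := by field_simp
    nlinarith [h2]

lemma block2 {s x c₁ c₂ : ℝ} (hx : 0 ≤ x) (hxs : x ≤ s) (h1 : 0 < c₁) (h2 : 0 < c₂)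
    (hsum : c₁ + c₂ = 1) :
    s * Real.log s - x * Real.log x - (s - x) * Real.log (s - x) ≤
      -(x * Real.log c₁) - (s - x) * Real.log c₂ := by
  rcases (hx.trans hxs).eq_or_lt with hs | hs
  · have hx0 : x = 0 := le_antisymm (hs ▸ hxs) hx
    simp [← hs, hx0]
  · have g1 := gibbs hx (mul_pos h1 hs)
    have g2 := gibbs (sub_nonneg.2 hxs) (mul_pos h2 hs)
    rw [Real.log_mul h1.ne' hs.ne'] at g1
    rw [Real.log_mul h2.ne' hs.ne'] at g2
    have hc : c₁ * s + c₂ * s = s := by rw [← add_mul, hsum, one_mul]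
    nlinarith [g1, g2]

lemma block3 {s x y c₁ c₂ c₃ : ℝ} (hx : 0 ≤ x) (hy : 0 ≤ y) (hxy : x + y ≤ s)
    (h1 : 0 < c₁) (h2 : 0 < c₂) (h3 : 0 < c₃) (hsum : c₁ + c₂ + c₃ = 1) :
    s * Real.log s - x * Real.log x - y * Real.log y - (s - x - y) * Real.log (s - x - y) ≤
      -(x * Real.log c₁) - y * Real.log c₂ - (s - x - y) * Real.log c₃ := by
  have hs0 : 0 ≤ s := le_trans (by linarith) hxy
  rcases hs0.eq_or_lt with hs | hs
  · have hx0 : x = 0 := by linarith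
    have hy0 : y = 0 := by linarith
    simp [← hs, hx0, hy0]
  · have g1 := gibbs hx (mul_pos h1 hs)
    have g2 := gibbs hy (mul_pos h2 hs)
    have g3 := gibbs (by linarith : (0:ℝ) ≤ s - x - y) (mul_pos h3 hs)
    rw [Real.log_mul h1.ne' hs.ne'] at g1
    rw [Real.log_mul h2.ne' hs.ne'] at g2
    rw [Real.log_mul h3.ne' hs.ne'] at g3
    have hc : c₁ * s + c₂ * s + c₃ * s = s := by rw [← add_mul, ← add_mul, hsum, one_mul]
    nlinarith [g1, g2, g3]

lemma master {a b : ℝ} {p : ℝ × ℝ} (h : p ∈ Dab a b) :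
    fab a b p ≤ a / 2 * Real.log 5 - (1 - b) / 2 * Real.log (9 / 5) := by
  obtain ⟨δ, ε⟩ := p
  obtain ⟨h1, h2, h3, h4, h5⟩ := h
  simp only at h1 h2 h3 h4 h5
  have e1 := block2 (s := (a + 1 - b) / 2) h1 h4 (by norm_num : (0:ℝ) < 2/5)
    (by norm_num : (0:ℝ) < 3/5) (by norm_num)
  have e2 := block2 (s := (a - 1 - b) / 2) h2 h5 (by norm_num : (0:ℝ) < 2/3)
    (by norm_num : (0:ℝ) < 1/3) (by norm_num)
  have e3 := block3 (s := b) h1 h2 h3 (by norm_num : (0:ℝ) < 1/2)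
    (by norm_num : (0:ℝ) < 1/6) (by norm_num : (0:ℝ) < 1/3) (by norm_num)
  have l25 : Real.log (2/5) = Real.log 2 - Real.log 5 := Real.log_div (by norm_num) (by norm_num)
  have l35 : Real.log (3/5) = Real.log 3 - Real.log 5 := Real.log_div (by norm_num) (by norm_num)
  have l23 : Real.log (2/3) = Real.log 2 - Real.log 3 := Real.log_div (by norm_num) (by norm_num)
  have l13 : Real.log (1/3) = -Real.log 3 := by rw [one_div, Real.log_inv]
  have l12 : Real.log (1/2) = -Real.log 2 := by rw [one_div, Real.log_inv]
  have l16 : Real.log (1/6) = -(Real.log 2 + Real.log 3) := by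
    rw [one_div, Real.log_inv, show (6:ℝ) = 2 * 3 by norm_num,
      Real.log_mul (by norm_num) (by norm_num)]
  have l95 : Real.log (9/5) = 2 * Real.log 3 - Real.log 5 := by
    rw [Real.log_div (by norm_num) (by norm_num), show (9:ℝ) = 3 ^ 2 by norm_num,
      Real.log_pow]
    push_cast; ring
  rw [l25, l35] at e1
  rw [l23, l13] at e2
  rw [l12, l16, l13] at e3
  simp only [fab]
  rw [l95]
  nlinarith [e1, e2, e3]

noncomputable def psi (t : ℝ) : ℝ :=
  (1 + (-1) * t) * Real.log (1 + (-1) * t)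
  + (5/4 + (1/2) * t) * Real.log (5/4 + (1/2) * t)
  - (3/4 + (1/2) * t) * Real.log (3/4 + (1/2) * t)
  - (1/3 + (-1) * t) * Real.log (1/3 + (-1) * t)
  + (1/4 + (1/2) * t) * Real.log (1/4 + (1/2) * t)
  - (1/12 + (1/2) * t) * Real.log (1/12 + (1/2) * t)
  + (Real.log 2 + (1/3) * (Real.log 2 + Real.log 3))

lemma fab_eq (t : ℝ) : fab (5/2) (1 - t) (1/2, 1/6) = psi t := by
  have l12 : Real.log (1/2) = -Real.log 2 := by rw [one_div, Real.log_inv]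
  have l16 : Real.log (1/6) = -(Real.log 2 + Real.log 3) := by
    rw [one_div, Real.log_inv, show (6:ℝ) = 2 * 3 by norm_num,
      Real.log_mul (by norm_num) (by norm_num)]
  have e : fab (5/2) (1 - t) (1/2, 1/6) =
    (1 - t) * Real.log (1 - t) - 2 * (1/2) * Real.log (1/2)
    + ((5/2 + 1 - (1 - t)) / 2) * Real.log ((5/2 + 1 - (1 - t)) / 2)
    - ((5/2 + 1 - (1 - t)) / 2 - 1/2) * Real.log ((5/2 + 1 - (1 - t)) / 2 - 1/2)
    - 2 * (1/6) * Real.log (1/6)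
    - ((1 - t) - 1/2 - 1/6) * Real.log ((1 - t) - 1/2 - 1/6)
    + ((5/2 - 1 - (1 - t)) / 2) * Real.log ((5/2 - 1 - (1 - t)) / 2)
    - ((5/2 - 1 - (1 - t)) / 2 - 1/6) * Real.log ((5/2 - 1 - (1 - t)) / 2 - 1/6) := rfl
  rw [e,
    show ((5:ℝ)/2 + 1 - (1 - t)) / 2 = 5/4 + (1/2) * t by ring,
    show (5:ℝ)/4 + (1/2) * t - 1/2 = 3/4 + (1/2) * t by ring,
    show ((5:ℝ)/2 - 1 - (1 - t)) / 2 = 1/4 + (1/2) * t by ring,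
    show (1:ℝ)/4 + (1/2) * t - 1/6 = 1/12 + (1/2) * t by ring,
    show (1:ℝ) - t - 1/2 - 1/6 = 1/3 + (-1) * t by ring,
    show (1:ℝ) - t = 1 + (-1) * t by ring,
    l12, l16, psi]
  ring

lemma l54 : Real.log (5/4) = Real.log 5 - 2 * Real.log 2 := by
  rw [Real.log_div (by norm_num) (by norm_num), show (4:ℝ) = 2 ^ 2 by norm_num, Real.log_pow]
  push_cast; ring
lemma l34 : Real.log (3/4) = Real.log 3 - 2 * Real.log 2 := by
  rw [Real.log_div (by norm_num) (by norm_num), show (4:ℝ) = 2 ^ 2 by norm_num, Real.log_pow]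
  push_cast; ring
lemma l14 : Real.log (1/4) = -(2 * Real.log 2) := by
  rw [one_div, Real.log_inv, show (4:ℝ) = 2 ^ 2 by norm_num, Real.log_pow]
  push_cast; ring
lemma l13' : Real.log (1/3) = -Real.log 3 := by rw [one_div, Real.log_inv]
lemma l112 : Real.log (1/12) = -(2 * Real.log 2 + Real.log 3) := by
  rw [one_div, Real.log_inv, show (12:ℝ) = 2 ^ 2 * 3 by norm_num,
    Real.log_mul (by norm_num) (by norm_num), Real.log_pow]
  push_cast; ring
lemma l95' : Real.log (9/5) = 2 * Real.log 3 - Real.log 5 := by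
  rw [Real.log_div (by norm_num) (by norm_num), show (9:ℝ) = 3 ^ 2 by norm_num, Real.log_pow]
  push_cast; ring

lemma psi_zero : psi 0 = 5/4 * Real.log 5 := by
  have : psi 0 = Real.log 1 + (5/4) * Real.log (5/4) - (3/4) * Real.log (3/4)
      - (1/3) * Real.log (1/3) + (1/4) * Real.log (1/4) - (1/12) * Real.log (1/12)
      + (Real.log 2 + (1/3) * (Real.log 2 + Real.log 3)) := by
    simp only [psi]; norm_num
  rw [this, l54, l34, l13', l14, l112, Real.log_one]; ring

lemma hda_affine {c : ℝ} (d : ℝ) (hc : c ≠ 0) :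
    HasDerivAt (fun t : ℝ => (c + d * t) * Real.log (c + d * t)) (d * (Real.log c + 1)) 0 := by
  have h1 : HasDerivAt (fun t : ℝ => c + d * t) d 0 := by
    simpa using ((hasDerivAt_id (0:ℝ)).const_mul d).const_add c
  have h2 : HasDerivAt (fun x : ℝ => x * Real.log x) (Real.log (c + d * 0) + 1) (c + d * 0) :=
    Real.hasDerivAt_mul_log (by simpa using hc)
  have h3 := h2.comp 0 h1
  simp only [mul_zero, add_zero] at h3
  rw [show (Real.log c + 1) * d = d * (Real.log c + 1) by ring] at h3
  exact h3

lemma psi_hasDeriv : HasDerivAt psi (-(1/2 * Real.log (9/5))) 0 := by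
  have h1 := hda_affine (c := 1) (-1) one_ne_zero
  have h2 := hda_affine (c := 5/4) (1/2) (by norm_num)
  have h3 := hda_affine (c := 3/4) (1/2) (by norm_num)
  have h4 := hda_affine (c := 1/3) (-1) (by norm_num)
  have h5 := hda_affine (c := 1/4) (1/2) (by norm_num)
  have h6 := hda_affine (c := 1/12) (1/2) (by norm_num)
  have H := (((((h1.add h2).sub h3).sub h4).add h5).sub h6).add_const
      (Real.log 2 + (1/3) * (Real.log 2 + Real.log 3))
  have hval : -1 * (Real.log 1 + 1) + 1/2 * (Real.log (5/4) + 1) - 1/2 * (Real.log (3/4) + 1)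
      - -1 * (Real.log (1/3) + 1) + 1/2 * (Real.log (1/4) + 1) - 1/2 * (Real.log (1/12) + 1)
      = -(1/2 * Real.log (9/5)) := by
    rw [l54, l34, l13', l14, l112, l95', Real.log_one]; ring
  rw [← hval]
  exact H

lemma kappa_le {ν b : ℝ} (hν : 1 ≤ ν) (hb1 : 2 / (ν + 1) ≤ b) (hb2 : b ≤ 1) :
    kappa (b * ν) (1 - b) ≤ 1/2 * Real.log 5 - (1/2 * Real.log (9/5)) / ν := by
  have hν0 : (0:ℝ) < ν := by linarith
  have hb0 : 0 < b := lt_of_lt_of_le (div_pos two_pos (by linarith)) hb1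
  have ha : 0 < b * ν := mul_pos hb0 hν0
  have hbν1 : 2 ≤ b * (ν + 1) := (div_le_iff₀ (by linarith)).mp hb1
  have hne : ((0:ℝ), (0:ℝ)) ∈ Dab (b * ν) (1 - b) := by
    refine ⟨le_refl _, le_refl _, by simpa using (by linarith : (0:ℝ) ≤ 1 - b), ?_, ?_⟩
    · simp only; nlinarith
    · simp only; nlinarith
  have hsup : sSup (fab (b * ν) (1 - b) '' Dab (b * ν) (1 - b)) ≤
      (b * ν) / 2 * Real.log 5 - b / 2 * Real.log (9/5) := by
    apply csSup_le ⟨_, Set.mem_image_of_mem _ hne⟩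
    rintro y ⟨p, hp, rfl⟩
    have := master hp
    calc fab (b * ν) (1 - b) p ≤ (b * ν) / 2 * Real.log 5 - (1 - (1 - b)) / 2 * Real.log (9/5) := this
      _ = (b * ν) / 2 * Real.log 5 - b / 2 * Real.log (9/5) := by ring_nf
  have : kappa (b * ν) (1 - b) ≤
      (1 / (b * ν)) * ((b * ν) / 2 * Real.log 5 - b / 2 * Real.log (9/5)) := by
    unfold kappa
    exact mul_le_mul_of_nonneg_left hsup (by positivity)
  calc kappa (b * ν) (1 - b) ≤ _ := this
    _ = 1/2 * Real.log 5 - (1/2 * Real.log (9/5)) / ν := by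
        field_simp

/-- `lim_{ν→∞} g(ν) = (1/2) log(9/5)`. -/
theorem stmt13 : Tendsto gnu atTop (nhds ((1 / 2) * Real.log (9 / 5))) := by
  -- upper bound on fnu gives lower bound on gnu
  have key_upper : ∀ᶠ ν in atTop, (1/2) * Real.log (9/5) ≤ gnu ν := by
    filter_upwards [eventually_ge_atTop (1:ℝ)] with ν hν
    have hν0 : (0:ℝ) < ν := by linarith
    have h1mem : (1:ℝ) ∈ Set.Icc (2/(ν+1)) 1 :=
      ⟨by rw [div_le_one (by linarith)]; linarith, le_refl _⟩
    have hfnu : fnu ν ≤ 1/2 * Real.log 5 - (1/2 * Real.log (9/5)) / ν := by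
      apply csSup_le ⟨_, Set.mem_image_of_mem _ h1mem⟩
      rintro y ⟨b, hb, rfl⟩
      exact kappa_le hν hb.1 hb.2
    have : gnu ν = ν * ((1/2) * Real.log 5 - fnu ν) := rfl
    rw [this]
    have h2 : (1/2 * Real.log (9/5)) / ν ≤ (1/2) * Real.log 5 - fnu ν := by linarith
    calc (1/2) * Real.log (9/5) = ν * ((1/2 * Real.log (9/5)) / ν) := by field_simp
      _ ≤ ν * ((1/2) * Real.log 5 - fnu ν) := mul_le_mul_of_nonneg_left h2 hν0.le
  -- lower bound on fnu gives upper bound on gnu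
  have key_lower : ∀ᶠ ν in atTop, gnu ν ≤ -(slope psi 0 (5/(2*ν))) := by
    filter_upwards [eventually_ge_atTop ((15:ℝ)/2)] with ν hν
    have hν0 : (0:ℝ) < ν := by linarith
    have hν1 : (1:ℝ) ≤ ν := by linarith
    set t := 5/(2*ν) with ht
    have ht0 : 0 < t := by positivity
    have ht3 : t ≤ 1/3 := by rw [ht, div_le_div_iff₀ (by linarith) (by norm_num)]; linarith
    have hmem : ((1:ℝ)/2, (1:ℝ)/6) ∈ Dab (5/2) (1 - t) := by
      refine ⟨by norm_num, by norm_num, ?_, ?_, ?_⟩ <;> simp only <;> linarith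
    have hBdd : BddAbove (fab (5/2) (1 - t) '' Dab (5/2) (1 - t)) := by
      refine ⟨(5/2) / 2 * Real.log 5 - (1 - (1 - t)) / 2 * Real.log (9/5), ?_⟩
      rintro y ⟨p, hp, rfl⟩
      exact master hp
    have hsup : psi t ≤ sSup (fab (5/2) (1 - t) '' Dab (5/2) (1 - t)) := by
      rw [← fab_eq t]
      exact le_csSup hBdd (Set.mem_image_of_mem _ hmem)
    have hk : (2/5) * psi t ≤ kappa (5/2) (1 - t) := by
      unfold kappa
      calc (2/5) * psi t ≤ (2/5) * sSup (fab (5/2) (1 - t) '' Dab (5/2) (1 - t)) :=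
            mul_le_mul_of_nonneg_left hsup (by norm_num)
        _ = (1/(5/2)) * sSup (fab (5/2) (1 - t) '' Dab (5/2) (1 - t)) := by norm_num
    have hb0mem : t ∈ Set.Icc (2/(ν+1)) 1 := by
      constructor
      · rw [ht, div_le_div_iff₀ (by linarith) (by linarith)]; nlinarith
      · rw [ht, div_le_one (by linarith)]; linarith
    have hBddOuter : BddAbove ((fun b : ℝ => kappa (b * ν) (1 - b)) '' Set.Icc (2/(ν+1)) 1) := by
      refine ⟨1/2 * Real.log 5 - (1/2 * Real.log (9/5)) / ν, ?_⟩
      rintro y ⟨b, hb, rfl⟩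
      exact kappa_le hν1 hb.1 hb.2
    have htν : t * ν = 5/2 := by rw [ht]; field_simp
    have hfnu : (2/5) * psi t ≤ fnu ν := by
      have := le_csSup hBddOuter (Set.mem_image_of_mem (fun b : ℝ => kappa (b * ν) (1 - b)) hb0mem)
      rw [htν] at this
      exact le_trans hk this
    have : gnu ν ≤ ν * ((1/2) * Real.log 5 - (2/5) * psi t) := by
      unfold gnu
      apply mul_le_mul_of_nonneg_left _ hν0.le
      linarith
    calc gnu ν ≤ ν * ((1/2) * Real.log 5 - (2/5) * psi t) := this
      _ = -(slope psi 0 t) := by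
          rw [slope_def_field, psi_zero, ht]
          field_simp
          ring
  -- slope tends to the derivative
  have hslope : Tendsto (fun ν : ℝ => -(slope psi 0 (5/(2*ν)))) atTop
      (nhds ((1/2) * Real.log (9/5))) := by
    have h1 : Tendsto (fun ν : ℝ => 5/(2*ν)) atTop (nhdsWithin 0 {(0:ℝ)}ᶜ) := by
      rw [tendsto_nhdsWithin_iff]
      constructor
      · have := (tendsto_inv_atTop_zero (𝕜 := ℝ)).const_mul (5/2 : ℝ)
        simp only [mul_zero] at this
        apply this.congr
        intro ν
        rw [eq_comm, div_eq_mul_inv, mul_inv]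
        ring
      · filter_upwards [eventually_ge_atTop (1:ℝ)] with ν hν
        have : (0:ℝ) < 5/(2*ν) := by positivity
        exact this.ne'
    have h2 := (hasDerivAt_iff_tendsto_slope.mp psi_hasDeriv).comp h1
    have h3 := h2.neg
    rw [neg_neg] at h3
    exact h3
  exact tendsto_of_tendsto_of_tendsto_of_le_of_le' tendsto_const_nhds hslope key_upper key_lower
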